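/- Polyhedral characterization of the IBC TIN-achievable GDoF region under the TIN-optimality conditions (region part of Theorem 2): suppose the channel strength levels satisfy (i) α_{ii}^{[2]} ≥ α_{ii}^{[1]} + max over j≠i of α_{ij}^{[2]} for all cells i, and (ii) α_{ii}^{[l_i]} ≥ (max over j≠i of α_{ij}^{[l_i]}) + (max over pairs (l_k,k) with k≠i of α_{ki}^{[l_k]}) for all cells i and l_i ∈ {1,2}. Then the general TIN-achievable GDoF region P^IBC⋆ equals the set of tuples d ∈ ℝ^{2K} satisfying: d_i^{[l_i]} ≥ 0 for all i and l_i; for every i and l_i ∈ {1,2}, the sum over s ∈ {1,…,l_i} of d_i^{[s]} is at most α_{ii}^{[l_i]}; and for every m ∈ {2,…,K}, every sequence (i_1,…,i_m) of m distinct cells (taken cyclically, with i_0 = i_m), and every choice of l_{i_j} ∈ {1,2} for j = 1,…,m, the sum over j ∈ {1,…,m} of the sum over s ∈ {1,…,l_{i_j}} of d_{i_j}^{[s]} is at most the sum over j ∈ {1,…,m} of (α_{i_j i_j}^{[l_{i_j}]} − α_{i_j i_{j−1}}^{[l_{i_j}]}). -/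

import Mathlib

open Finset

/-- Positive part: `(x)⁺ = max {x, 0}`. -/
noncomputable def pplus (x : ℝ) : ℝ := max x 0

/-- Maximum over all pairs `(l, j)` with `j ≠ k` of `f j l`. -/
noncomputable def crossMax {K : ℕ} (hK : 2 ≤ K) (k : Fin K)
    (f : Fin K → Fin 2 → ℝ) : ℝ :=
  (Finset.univ.filter (fun p : Fin K × Fin 2 => p.1 ≠ k)).sup'
    (by
      haveI : Nontrivial (Fin K) := Fin.nontrivial_iff_two_le.mpr hK
      obtain ⟨j, hj⟩ := exists_ne k
      exact ⟨(j, (0 : Fin 2)), by simp [hj]⟩)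
    (fun p => f p.1 p.2)

/-- Minimum over all pairs `(l, j)` with `j ≠ k` of `f j l`. -/
noncomputable def crossMin {K : ℕ} (hK : 2 ≤ K) (k : Fin K)
    (f : Fin K → Fin 2 → ℝ) : ℝ :=
  (Finset.univ.filter (fun p : Fin K × Fin 2 => p.1 ≠ k)).inf'
    (by
      haveI : Nontrivial (Fin K) := Fin.nontrivial_iff_two_le.mpr hK
      obtain ⟨j, hj⟩ := exists_ne k
      exact ⟨(j, (0 : Fin 2)), by simp [hj]⟩)
    (fun p => f p.1 p.2)

/-- Maximum over all cells `j ≠ i` of `f j`. -/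
noncomputable def cellMax {K : ℕ} (hK : 2 ≤ K) (i : Fin K)
    (f : Fin K → ℝ) : ℝ :=
  (Finset.univ.filter (fun j : Fin K => j ≠ i)).sup'
    (by
      haveI : Nontrivial (Fin K) := Fin.nontrivial_iff_two_le.mpr hK
      obtain ⟨j, hj⟩ := exists_ne i
      exact ⟨j, by simp [hj]⟩)
    f

/-- IBC TIN upper bound on the GDoF of the first-decoded user of cell `k`.
Users are indexed by `Fin 2` (user `0` is UE 1, user `1` is UE 2);
`π k 0` and `π k 1` are the first and second decoded users of cell `k`. -/
noncomputable def ibcBound1 {K : ℕ} (hK : 2 ≤ K) (α : Fin K → Fin K → Fin 2 → ℝ)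
    (π : Fin K → Equiv.Perm (Fin 2)) (r : Fin K → Fin 2 → ℝ) (k : Fin K) : ℝ :=
  max 0 (min
    (α k k (π k 0) + r k (π k 0) -
      pplus (max (α k k (π k 0) + r k (π k 1))
        (crossMax hK k (fun j l => α k j (π k 0) + r j l))))
    (α k k (π k 1) + r k (π k 0) -
      pplus (max (α k k (π k 1) + r k (π k 1))
        (crossMax hK k (fun j l => α k j (π k 1) + r j l)))))

/-- IBC TIN upper bound on the GDoF of the second-decoded user of cell `k`. -/
noncomputable def ibcBound2 {K : ℕ} (hK : 2 ≤ K) (α : Fin K → Fin K → Fin 2 → ℝ)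
    (π : Fin K → Equiv.Perm (Fin 2)) (r : Fin K → Fin 2 → ℝ) (k : Fin K) : ℝ :=
  max 0 (α k k (π k 1) + r k (π k 1) -
    pplus (crossMax hK k (fun j l => α k j (π k 1) + r j l)))

/-- The IBC TIN region `P^IBC_π(r)`. -/
noncomputable def IBCr {K : ℕ} (hK : 2 ≤ K) (α : Fin K → Fin K → Fin 2 → ℝ)
    (π : Fin K → Equiv.Perm (Fin 2)) (r : Fin K → Fin 2 → ℝ) :
    Set (Fin K → Fin 2 → ℝ) :=
  {d | ∀ k : Fin K,
    (0 ≤ d k (π k 0) ∧ d k (π k 0) ≤ ibcBound1 hK α π r k) ∧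
    (0 ≤ d k (π k 1) ∧ d k (π k 1) ≤ ibcBound2 hK α π r k)}

/-- The general TIN-achievable GDoF region of the IBC, `P^IBC⋆`. -/
noncomputable def IBCstar {K : ℕ} (hK : 2 ≤ K) (α : Fin K → Fin K → Fin 2 → ℝ) :
    Set (Fin K → Fin 2 → ℝ) :=
  {d | ∃ π : Fin K → Equiv.Perm (Fin 2), ∃ r : Fin K → Fin 2 → ℝ,
    (∀ k l, r k l ≤ 0) ∧ d ∈ IBCr hK α π r}

/-- IMAC TIN upper bound on the GDoF of user `π k 0` (decoded last) of cell `k`. -/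
noncomputable def imacBound1 {K : ℕ} (hK : 2 ≤ K) (α : Fin K → Fin K → Fin 2 → ℝ)
    (π : Fin K → Equiv.Perm (Fin 2)) (r : Fin K → Fin 2 → ℝ) (k : Fin K) : ℝ :=
  max 0 (α k k (π k 0) + r k (π k 0) -
    pplus (crossMax hK k (fun j l => α j k l + r j l)))

/-- IMAC TIN upper bound on the GDoF of user `π k 1` of cell `k`. -/
noncomputable def imacBound2 {K : ℕ} (hK : 2 ≤ K) (α : Fin K → Fin K → Fin 2 → ℝ)
    (π : Fin K → Equiv.Perm (Fin 2)) (r : Fin K → Fin 2 → ℝ) (k : Fin K) : ℝ :=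
  max 0 (α k k (π k 1) + r k (π k 1) -
    pplus (max (α k k (π k 0) + r k (π k 0))
      (crossMax hK k (fun j l => α j k l + r j l))))

/-- The IMAC TIN region `P^IMAC_π(r̄)`. -/
noncomputable def IMACr {K : ℕ} (hK : 2 ≤ K) (α : Fin K → Fin K → Fin 2 → ℝ)
    (π : Fin K → Equiv.Perm (Fin 2)) (r : Fin K → Fin 2 → ℝ) :
    Set (Fin K → Fin 2 → ℝ) :=
  {d | ∀ k : Fin K,
    (0 ≤ d k (π k 0) ∧ d k (π k 0) ≤ imacBound1 hK α π r k) ∧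
    (0 ≤ d k (π k 1) ∧ d k (π k 1) ≤ imacBound2 hK α π r k)}

/-- The general TIN-achievable GDoF region of the IMAC, `P^IMAC⋆`. -/
noncomputable def IMACstar {K : ℕ} (hK : 2 ≤ K) (α : Fin K → Fin K → Fin 2 → ℝ) :
    Set (Fin K → Fin 2 → ℝ) :=
  {d | ∃ π : Fin K → Equiv.Perm (Fin 2), ∃ r : Fin K → Fin 2 → ℝ,
    (∀ k l, r k l ≤ 0) ∧ d ∈ IMACr hK α π r}

/-- `betaD hK α π r k l = β_k^{[π_k(l+1)]}`, indexed by decoding position `l : Fin 2`. -/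
noncomputable def betaD {K : ℕ} (hK : 2 ≤ K) (α : Fin K → Fin K → Fin 2 → ℝ)
    (π : Fin K → Equiv.Perm (Fin 2)) (r : Fin K → Fin 2 → ℝ)
    (k : Fin K) (l : Fin 2) : ℝ :=
  if l = 0 then
    min
      (min (min (α k k (π k 0)) (-(r k (π k 1))))
        (α k k (π k 0) - crossMax hK k (fun j l' => α k j (π k 0) + r j l')))
      (min (min (α k k (π k 1)) (-(r k (π k 1))))
        (α k k (π k 1) - crossMax hK k (fun j l' => α k j (π k 1) + r j l')))
  else
    min (α k k (π k 1))
      (α k k (π k 1) - crossMax hK k (fun j l' => α k j (π k 1) + r j l'))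

/-- The dual uplink power allocation `r̄_k^{[π_k(l)]} = −α_{kk}^{[π_k(l)]} + β_k^{[π_k(l)]}`,
expressed as a function of the user index `u`. -/
noncomputable def rbarDual {K : ℕ} (hK : 2 ≤ K) (α : Fin K → Fin K → Fin 2 → ℝ)
    (π : Fin K → Equiv.Perm (Fin 2)) (r : Fin K → Fin 2 → ℝ)
    (k : Fin K) (u : Fin 2) : ℝ :=
  -α k k u + betaD hK α π r k ((π k).symm u)

/-- `gammaD hK α π r k l = γ_k^{[π_k(l+1)]}`, indexed by decoding position `l : Fin 2`. -/
noncomputable def gammaD {K : ℕ} (hK : 2 ≤ K) (α : Fin K → Fin K → Fin 2 → ℝ)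
    (π : Fin K → Equiv.Perm (Fin 2)) (r : Fin K → Fin 2 → ℝ)
    (k : Fin K) (l : Fin 2) : ℝ :=
  if l = 0 then
    max 0 (crossMax hK k (fun j l' => α j k l' + r j l'))
  else
    max (max 0 (α k k (π k 0) + r k (π k 0)))
      (crossMax hK k (fun j l' => α j k l' + r j l'))

/-- `γ_j^{[u]}` indexed by the user index `u`. -/
noncomputable def gammaU {K : ℕ} (hK : 2 ≤ K) (α : Fin K → Fin K → Fin 2 → ℝ)
    (π : Fin K → Equiv.Perm (Fin 2)) (r : Fin K → Fin 2 → ℝ)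
    (j : Fin K) (u : Fin 2) : ℝ :=
  gammaD hK α π r j ((π j).symm u)

section Helpers

variable {K : ℕ}

lemma fin2cases (u : Fin 2) : u = 0 ∨ u = 1 := by omega

lemma perm2 (e : Equiv.Perm (Fin 2)) : (e 0 = 0 ∧ e 1 = 1) ∨ (e 0 = 1 ∧ e 1 = 0) := by
  revert e; decide

lemma pplus_nonneg (x : ℝ) : 0 ≤ pplus x := le_max_right _ _

lemma le_pplus (x : ℝ) : x ≤ pplus x := le_max_left _ _

lemma pplus_mono {x y : ℝ} (h : x ≤ y) : pplus x ≤ pplus y := max_le_max h le_rfl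

lemma pplus_le {x y : ℝ} (h1 : x ≤ y) (h2 : 0 ≤ y) : pplus x ≤ y := max_le h1 h2

lemma pplus_of_nonneg {x : ℝ} (h : 0 ≤ x) : pplus x = x := max_eq_left h

lemma pplus_add_max (b ρ : ℝ) : pplus (b + ρ) = b + max ρ (-b) := by
  unfold pplus
  rw [max_comm ρ (-b), ← max_add_add_left, add_neg_cancel, max_comm]

lemma le_crossMax (hK : 2 ≤ K) (k : Fin K) (f : Fin K → Fin 2 → ℝ) {j : Fin K} (l : Fin 2)
    (hj : j ≠ k) : f j l ≤ crossMax hK k f :=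
  Finset.le_sup' (fun p : Fin K × Fin 2 => f p.1 p.2)
    (show ((j, l) : Fin K × Fin 2) ∈ _ by simp [hj])

lemma crossMax_le (hK : 2 ≤ K) {k : Fin K} {f : Fin K → Fin 2 → ℝ} {x : ℝ}
    (h : ∀ j l, j ≠ k → f j l ≤ x) : crossMax hK k f ≤ x := by
  apply Finset.sup'_le
  rintro ⟨j, l⟩ hp
  simp only [Finset.mem_filter] at hp
  exact h j l hp.2

lemma le_cellMax (hK : 2 ≤ K) (i : Fin K) (f : Fin K → ℝ) {j : Fin K} (hj : j ≠ i) :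
    f j ≤ cellMax hK i f :=
  Finset.le_sup' f (show j ∈ _ by simp [hj])

lemma filter_le_zero : Finset.univ.filter (fun s : Fin 2 => s ≤ 0) = {0} := by decide

lemma filter_le_one : Finset.univ.filter (fun s : Fin 2 => s ≤ 1) = Finset.univ := by decide

lemma sum_filter_zero (g : Fin 2 → ℝ) :
    ∑ s ∈ Finset.univ.filter (fun s : Fin 2 => s ≤ 0), g s = g 0 := by
  rw [filter_le_zero, Finset.sum_singleton]

lemma sum_filter_one (g : Fin 2 → ℝ) :
    ∑ s ∈ Finset.univ.filter (fun s : Fin 2 => s ≤ 1), g s = g 0 + g 1 := by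
  rw [filter_le_one, Fin.sum_univ_two]

end Helpers

section Converse

lemma lemA {K : ℕ} (hK : 2 ≤ K) (α : Fin K → Fin K → Fin 2 → ℝ)
    (hα : ∀ k i l, 0 ≤ α k i l) (hord : ∀ k, α k k 0 ≤ α k k 1)
    {π : Fin K → Equiv.Perm (Fin 2)} {r : Fin K → Fin 2 → ℝ} (hr : ∀ k l, r k l ≤ 0)
    {d : Fin K → Fin 2 → ℝ} (hd : d ∈ IBCr hK α π r) (k : Fin K) (li : Fin 2) :
    ∑ s ∈ Finset.univ.filter (fun s : Fin 2 => s ≤ li), d k s ≤ α k k li := by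
  obtain ⟨⟨hd0n, hd0⟩, hd1n, hd1⟩ := hd k
  rcases perm2 (π k) with ⟨h0, h1⟩ | ⟨h0, h1⟩ <;>
      simp only [ibcBound1, ibcBound2, h0, h1] at hd0 hd1 hd0n hd1n <;>
      rcases fin2cases li with rfl | rfl
  · rw [sum_filter_zero]
    refine hd0.trans (max_le (hα k k 0) ((min_le_left _ _).trans ?_))
    have := pplus_nonneg (max (α k k 0 + r k 1) (crossMax hK k fun j l => α k j 0 + r j l))
    have := hr k 0
    linarith
  · rw [sum_filter_one]
    set M1 := crossMax hK k (fun j l => α k j 1 + r j l) with hM1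
    rcases le_or_gt (α k k 1 + r k 1 - pplus M1) 0 with hB | hB
    · have h1' : d k 1 ≤ 0 := hd1.trans (max_le le_rfl hB)
      have h2 : d k 0 ≤ α k k 1 := by
        refine hd0.trans (max_le (hα k k 1) ((min_le_right _ _).trans ?_))
        have := pplus_nonneg (max (α k k 1 + r k 1) M1)
        have := hr k 0
        linarith
      linarith
    · have h3 := le_pplus M1
      have h4 := pplus_nonneg M1
      have hpe : pplus (max (α k k 1 + r k 1) M1) = α k k 1 + r k 1 := by
        rw [max_eq_left (by linarith)]; exact pplus_of_nonneg (by linarith)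
      rw [hpe] at hd0
      have h6 : d k 0 ≤ -(r k 1) := by
        refine hd0.trans (max_le (by linarith [hr k 1]) ((min_le_right _ _).trans (by
          linarith [hr k 0])))
      have h7 : d k 1 ≤ α k k 1 + r k 1 - pplus M1 := hd1.trans (max_le hB.le le_rfl)
      linarith
  · rw [sum_filter_zero]
    refine hd1.trans (max_le (hα k k 0) ?_)
    have := pplus_nonneg (crossMax hK k fun j l => α k j 0 + r j l)
    have := hr k 0
    linarith
  · rw [sum_filter_one]
    set M0 := crossMax hK k (fun j l => α k j 0 + r j l) with hM0
    set M1 := crossMax hK k (fun j l => α k j 1 + r j l) with hM1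
    have h4 := pplus_nonneg M0
    rcases le_or_gt (α k k 0 + r k 0 - pplus M0) 0 with hB | hB
    · have h1' : d k 0 ≤ 0 := hd1.trans (max_le le_rfl hB)
      have h2 : d k 1 ≤ α k k 1 := by
        refine hd0.trans (max_le (hα k k 1) ((min_le_left _ _).trans ?_))
        have := pplus_nonneg (max (α k k 1 + r k 0) M1)
        have := hr k 1
        linarith
      linarith
    · have h5 : d k 0 ≤ α k k 0 + r k 0 := hd1.trans (max_le (by linarith) (by linarith))
      have h6 : α k k 1 + r k 0 ≤ pplus (max (α k k 1 + r k 0) M1) := by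
        refine (le_max_left _ _).trans (le_pplus _)
      have h7 : d k 1 ≤ -(r k 0) := by
        refine hd0.trans (max_le (by linarith [hr k 0]) ((min_le_left _ _).trans ?_))
        have := hord k
        have := hr k 1
        linarith
      linarith [hord k]
end Converse

section LemB

lemma lemB {K : ℕ} (hK : 2 ≤ K) (α : Fin K → Fin K → Fin 2 → ℝ)
    (hα : ∀ k i l, 0 ≤ α k i l) (hord : ∀ k, α k k 0 ≤ α k k 1)
    (h1c : ∀ i : Fin K, α i i 0 + cellMax hK i (fun j => α i j 1) ≤ α i i 1)
    {π : Fin K → Equiv.Perm (Fin 2)} {r : Fin K → Fin 2 → ℝ} (hr : ∀ k l, r k l ≤ 0)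
    {d : Fin K → Fin 2 → ℝ} (hd : d ∈ IBCr hK α π r) (k j : Fin K) (hjk : j ≠ k) (li : Fin 2) :
    ∑ s ∈ Finset.univ.filter (fun s : Fin 2 => s ≤ li), d k s ≤
      max 0 (α k k li + max (r k 0) (r k 1) - pplus (α k j li + max (r j 0) (r j 1))) := by
  obtain ⟨⟨hd0n, hd0⟩, hd1n, hd1⟩ := hd k
  have hXM : ∀ li : Fin 2, α k j li + max (r j 0) (r j 1) ≤
      crossMax hK k (fun j' l => α k j' li + r j' l) := by
    intro li
    have e0 := le_crossMax hK k (fun j' l => α k j' li + r j' l) 0 hjk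
    have e1 := le_crossMax hK k (fun j' l => α k j' li + r j' l) 1 hjk
    rcases max_choice (r j 0) (r j 1) with h | h <;> rw [h]
    · exact e0
    · exact e1
  have hrkm0 : r k 0 ≤ max (r k 0) (r k 1) := le_max_left _ _
  have hrkm1 : r k 1 ≤ max (r k 0) (r k 1) := le_max_right _ _
  rcases perm2 (π k) with ⟨h0, h1⟩ | ⟨h0, h1⟩ <;>
      simp only [ibcBound1, ibcBound2, h0, h1] at hd0 hd1 hd0n hd1n <;>
      rcases fin2cases li with rfl | rfl
  -- case π = id, li = 0
  · rw [sum_filter_zero]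
    set M0 := crossMax hK k (fun j' l => α k j' 0 + r j' l) with hM0
    have hpX := pplus_mono (hXM 0)
    refine hd0.trans (max_le_max le_rfl ((min_le_left _ _).trans ?_))
    have := pplus_mono (le_max_right (α k k 0 + r k 1) M0)
    linarith
  -- case π = id, li = 1
  · rw [sum_filter_one]
    set M1 := crossMax hK k (fun j' l => α k j' 1 + r j' l) with hM1
    have hpX := pplus_mono (hXM 1)
    have h3 := le_pplus M1
    have h4 := pplus_nonneg M1
    rcases le_or_gt (α k k 1 + r k 1 - pplus M1) 0 with hB | hB
    · have hd1' : d k 1 ≤ 0 := hd1.trans (max_le le_rfl hB)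
      have h5 : d k 0 ≤ max 0 (α k k 1 + max (r k 0) (r k 1) -
          pplus (α k j 1 + max (r j 0) (r j 1))) := by
        refine hd0.trans (max_le_max le_rfl ((min_le_right _ _).trans ?_))
        have := pplus_mono (le_max_right (α k k 1 + r k 1) M1)
        linarith
      linarith
    · have hpe : pplus (max (α k k 1 + r k 1) M1) = α k k 1 + r k 1 := by
        rw [max_eq_left (by linarith)]; exact pplus_of_nonneg (by linarith)
      rw [hpe] at hd0
      have h6 : d k 0 ≤ max (r k 0) (r k 1) - r k 1 := by
        refine hd0.trans (max_le (by linarith) ((min_le_right _ _).trans (by linarith)))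
      have h7 : d k 1 ≤ α k k 1 + r k 1 - pplus M1 := hd1.trans (max_le hB.le le_rfl)
      have h8 : α k k 1 + max (r k 0) (r k 1) - pplus (α k j 1 + max (r j 0) (r j 1)) ≤
          max 0 (α k k 1 + max (r k 0) (r k 1) - pplus (α k j 1 + max (r j 0) (r j 1))) :=
        le_max_right _ _
      linarith
  -- case π = swap, li = 0
  · rw [sum_filter_zero]
    set M0 := crossMax hK k (fun j' l => α k j' 0 + r j' l) with hM0
    have hpX := pplus_mono (hXM 0)
    refine hd1.trans (max_le_max le_rfl ?_)
    linarith
  -- case π = swap, li = 1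
  · rw [sum_filter_one]
    set M0 := crossMax hK k (fun j' l => α k j' 0 + r j' l) with hM0
    set M1 := crossMax hK k (fun j' l => α k j' 1 + r j' l) with hM1
    have hpX := pplus_mono (hXM 1)
    have h4 := pplus_nonneg M0
    rcases le_or_gt (α k k 0 + r k 0 - pplus M0) 0 with hB | hB
    · have hd0' : d k 0 ≤ 0 := hd1.trans (max_le le_rfl hB)
      have h5 : d k 1 ≤ max 0 (α k k 1 + max (r k 0) (r k 1) -
          pplus (α k j 1 + max (r j 0) (r j 1))) := by
        refine hd0.trans (max_le_max le_rfl ((min_le_left _ _).trans ?_))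
        have := pplus_mono (le_max_right (α k k 1 + r k 0) M1)
        linarith
      linarith
    · -- B0 > 0 : note M1 ≤ cellMax ≤ α k k 1 - α k k 0, so α k k 1 + r k 0 > M1
      have hM1cell : M1 ≤ cellMax hK k (fun j' => α k j' 1) := by
        refine crossMax_le hK (fun j' l hj' => ?_)
        have := le_cellMax hK k (fun j' => α k j' 1) hj'
        have := hr j' l
        linarith
      have hcell : cellMax hK k (fun j' => α k j' 1) ≤ α k k 1 - α k k 0 := by
        have := h1c k; linarith
      have hge : M1 ≤ α k k 1 + r k 0 := by linarith
      have hpos : 0 ≤ α k k 1 + r k 0 := by linarith [hord k]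
      have hpe : pplus (max (α k k 1 + r k 0) M1) = α k k 1 + r k 0 := by
        rw [max_eq_left hge]; exact pplus_of_nonneg hpos
      rw [hpe] at hd0
      have h5 : d k 0 ≤ α k k 0 + r k 0 := hd1.trans (max_le (by linarith) (by linarith))
      have h6 : d k 1 ≤ max (r k 0) (r k 1) - r k 0 := by
        refine hd0.trans (max_le (by linarith) ((min_le_left _ _).trans (by linarith)))
      -- pplus X ≤ α k j 1 ≤ cellMax ≤ α k k 1 - α k k 0
      have hXa : pplus (α k j 1 + max (r j 0) (r j 1)) ≤ α k j 1 := by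
        refine pplus_le ?_ (hα k j 1)
        have h70 := hr j 0; have h71 := hr j 1
        rcases max_choice (r j 0) (r j 1) with h | h <;> rw [h] <;> linarith
      have hja : α k j 1 ≤ cellMax hK k (fun j' => α k j' 1) :=
        le_cellMax hK k (fun j' => α k j' 1) hjk
      have h8 : α k k 1 + max (r k 0) (r k 1) - pplus (α k j 1 + max (r j 0) (r j 1)) ≤
          max 0 (α k k 1 + max (r k 0) (r k 1) - pplus (α k j 1 + max (r j 0) (r j 1))) :=
        le_max_right _ _
      linarith
end LemB

section Cycle

lemma finRotate_ne_self {m : ℕ} (hm : 2 ≤ m) (i : Fin m) : finRotate m i ≠ i := by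
  obtain ⟨n, rfl⟩ : ∃ n, m = n + 1 := ⟨m - 1, by omega⟩
  rw [finRotate_succ_apply]
  intro h
  have hv := congrArg Fin.val h
  simp only [Fin.add_def, Fin.val_one'] at hv
  have h2 : 1 % (n + 1) = 1 := Nat.mod_eq_of_lt (by omega)
  rw [h2] at hv
  have hi := i.isLt
  rcases Nat.lt_or_ge (i.val + 1) (n + 1) with hlt | hge
  · rw [Nat.mod_eq_of_lt hlt] at hv; omega
  · have hn : i.val = n := by omega
    rw [hn, Nat.mod_self] at hv; omega

lemma finRotate_symm_ne_self {m : ℕ} (hm : 2 ≤ m) (i : Fin m) : (finRotate m).symm i ≠ i := by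
  intro h
  refine finRotate_ne_self hm i ?_
  conv_lhs => rw [← h]
  rw [Equiv.apply_symm_apply]

lemma cycle_bound {K : ℕ} (hK : 2 ≤ K) (α : Fin K → Fin K → Fin 2 → ℝ)
    (hα : ∀ k i l, 0 ≤ α k i l) (hord : ∀ k, α k k 0 ≤ α k k 1)
    (h1c : ∀ i : Fin K, α i i 0 + cellMax hK i (fun j => α i j 1) ≤ α i i 1)
    (h2c : ∀ i : Fin K, ∀ li : Fin 2,
      cellMax hK i (fun j => α i j li) + crossMax hK i (fun j l => α j i l) ≤ α i i li)
    {π : Fin K → Equiv.Perm (Fin 2)} {r : Fin K → Fin 2 → ℝ} (hr : ∀ k l, r k l ≤ 0)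
    {d : Fin K → Fin 2 → ℝ} (hd : d ∈ IBCr hK α π r)
    (m : ℕ) (hm2 : 2 ≤ m) (c : Fin m → Fin K) (hc : Function.Injective c) (ℓ : Fin m → Fin 2) :
    ∑ j : Fin m, ∑ s ∈ Finset.univ.filter (fun s : Fin 2 => s ≤ ℓ j), d (c j) s ≤
      ∑ j : Fin m, (α (c j) (c j) (ℓ j) - α (c j) (c ((finRotate m).symm j)) (ℓ j)) := by
  set v : Fin m → ℝ := fun i =>
    max (max (r (c i) 0) (r (c i) 1)) (-(α (c (finRotate m i)) (c i) (ℓ (finRotate m i)))) with hv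
  have key : ∀ i : Fin m,
      ∑ s ∈ Finset.univ.filter (fun s : Fin 2 => s ≤ ℓ i), d (c i) s ≤
        (α (c i) (c i) (ℓ i) - α (c i) (c ((finRotate m).symm i)) (ℓ i)) +
          (v i - v ((finRotate m).symm i)) := by
    intro i
    have hne : c ((finRotate m).symm i) ≠ c i := fun h => finRotate_symm_ne_self hm2 i (hc h)
    have hne2 : c (finRotate m i) ≠ c i := fun h => finRotate_ne_self hm2 i (hc h)
    have hlb := lemB hK α hα hord h1c hr hd (c i) (c ((finRotate m).symm i)) hne (ℓ i)
    have hvsym : v ((finRotate m).symm i) =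
        max (max (r (c ((finRotate m).symm i)) 0) (r (c ((finRotate m).symm i)) 1))
          (-(α (c i) (c ((finRotate m).symm i)) (ℓ i))) := by
      simp only [hv]
      rw [Equiv.apply_symm_apply]
    have hid : pplus (α (c i) (c ((finRotate m).symm i)) (ℓ i) +
        max (r (c ((finRotate m).symm i)) 0) (r (c ((finRotate m).symm i)) 1)) =
        α (c i) (c ((finRotate m).symm i)) (ℓ i) + v ((finRotate m).symm i) := by
      rw [pplus_add_max, hvsym]
    rw [hid] at hlb
    refine hlb.trans (max_le ?_ ?_)
    · have hv1 : -(α (c (finRotate m i)) (c i) (ℓ (finRotate m i))) ≤ v i := le_max_right _ _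
      have hv2 : v ((finRotate m).symm i) ≤ 0 := by
        rw [hvsym]
        exact max_le (max_le (hr _ 0) (hr _ 1))
          (by linarith [hα (c i) (c ((finRotate m).symm i)) (ℓ i)])
      have hcell := le_cellMax hK (c i) (fun j => α (c i) j (ℓ i)) hne
      have hcross := le_crossMax hK (c i) (fun j l => α j (c i) l) (ℓ (finRotate m i)) hne2
      have hcond := h2c (c i) (ℓ i)
      linarith
    · have hρ : max (r (c i) 0) (r (c i) 1) ≤ v i := le_max_left _ _
      linarith
  have htel : ∑ i : Fin m, (v i - v ((finRotate m).symm i)) = 0 := by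
    rw [Finset.sum_sub_distrib, Equiv.sum_comp (finRotate m).symm v, sub_self]
  calc ∑ j : Fin m, ∑ s ∈ Finset.univ.filter (fun s : Fin 2 => s ≤ ℓ j), d (c j) s
      ≤ ∑ j : Fin m, ((α (c j) (c j) (ℓ j) - α (c j) (c ((finRotate m).symm j)) (ℓ j)) +
          (v j - v ((finRotate m).symm j))) := Finset.sum_le_sum (fun i _ => key i)
    _ = _ := by rw [Finset.sum_add_distrib, htel, add_zero]

end Cycle

section Achieve

/-- Cumulative GDoF `D_k^{[ℓ]} = ∑_{s ≤ ℓ} d_k^{[s]}`. -/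
noncomputable def Dsum {K : ℕ} (d : Fin K → Fin 2 → ℝ) (k : Fin K) (li : Fin 2) : ℝ :=
  ∑ s ∈ Finset.univ.filter (fun s : Fin 2 => s ≤ li), d k s

/-- Edge weight of the power-allocation difference-constraint graph. -/
noncomputable def wgt {K : ℕ} (α : Fin K → Fin K → Fin 2 → ℝ) (d : Fin K → Fin 2 → ℝ)
    (k j : Fin K) : ℝ :=
  max (Dsum d k 0 - α k k 0 + α k j 0) (Dsum d k 1 - α k k 1 + α k j 1)

/-- Source weight. -/
noncomputable def cst {K : ℕ} (α : Fin K → Fin K → Fin 2 → ℝ) (d : Fin K → Fin 2 → ℝ)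
    (k : Fin K) : ℝ :=
  max (Dsum d k 0 - α k k 0) (Dsum d k 1 - α k k 1)

/-- Value of a walk of length `t`. -/
noncomputable def wval {K : ℕ} (α : Fin K → Fin K → Fin 2 → ℝ) (d : Fin K → Fin 2 → ℝ)
    (t : ℕ) (p : ℕ → Fin K) : ℝ :=
  (∑ s ∈ Finset.range t, wgt α d (p s) (p (s + 1))) + cst α d (p t)

lemma Dsum_zero {K : ℕ} (d : Fin K → Fin 2 → ℝ) (k : Fin K) : Dsum d k 0 = d k 0 :=
  sum_filter_zero _

lemma Dsum_one {K : ℕ} (d : Fin K → Fin 2 → ℝ) (k : Fin K) : Dsum d k 1 = d k 0 + d k 1 :=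
  sum_filter_one _

lemma finRotate_val' {m : ℕ} (hm : 2 ≤ m) (i : Fin m) :
    (finRotate m i).val = if i.val + 1 < m then i.val + 1 else 0 := by
  obtain ⟨n, rfl⟩ : ∃ n, m = n + 1 := ⟨m - 1, by omega⟩
  rw [finRotate_succ_apply]
  have h2 : 1 % (n + 1) = 1 := Nat.mod_eq_of_lt (by omega)
  simp only [Fin.add_def, Fin.val_one', h2]
  have hiv := i.isLt
  by_cases hi : i.val + 1 < n + 1
  · rw [if_pos hi, Nat.mod_eq_of_lt hi]
  · rw [if_neg hi]
    have hn : i.val = n := by omega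
    rw [hn, Nat.mod_self]

lemma wcyc {K : ℕ} (hK : 2 ≤ K) (α : Fin K → Fin K → Fin 2 → ℝ)
    {d : Fin K → Fin 2 → ℝ}
    (hcyc : ∀ m : ℕ, 2 ≤ m → m ≤ K → ∀ c : Fin m → Fin K, Function.Injective c →
      ∀ ℓ : Fin m → Fin 2,
        ∑ j : Fin m, ∑ s ∈ Finset.univ.filter (fun s : Fin 2 => s ≤ ℓ j), d (c j) s ≤
          ∑ j : Fin m, (α (c j) (c j) (ℓ j) - α (c j) (c ((finRotate m).symm j)) (ℓ j)))
    (m : ℕ) (hm2 : 2 ≤ m) (q : Fin m → Fin K) (hq : Function.Injective q) :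
    ∑ i : Fin m, wgt α d (q i) (q (finRotate m i)) ≤ 0 := by
  have hmK : m ≤ K := by simpa using Fintype.card_le_of_injective q hq
  haveI : NeZero m := ⟨by omega⟩
  have hex : ∀ i : Fin m, ∃ li : Fin 2, wgt α d (q i) (q (finRotate m i)) =
      Dsum d (q i) li - α (q i) (q i) li + α (q i) (q (finRotate m i)) li := by
    intro i
    rcases max_choice (Dsum d (q i) 0 - α (q i) (q i) 0 + α (q i) (q (finRotate m i)) 0)
      (Dsum d (q i) 1 - α (q i) (q i) 1 + α (q i) (q (finRotate m i)) 1) with h | h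
    exacts [⟨0, h⟩, ⟨1, h⟩]
  choose ℓ hℓ using hex
  have hinj : Function.Injective (fun i : Fin m => q (-i)) :=
    fun a b h => neg_injective (hq h)
  have h := hcyc m hm2 hmK (fun i => q (-i)) hinj (fun i => ℓ (-i))
  have hpred : ∀ i : Fin m, -((finRotate m).symm i) = finRotate m (-i) := by
    intro i
    obtain ⟨n, rfl⟩ : ∃ n, m = n + 1 := ⟨m - 1, by omega⟩
    have hs : (finRotate (n + 1)).symm i = i - 1 := by
      rw [Equiv.symm_apply_eq, finRotate_succ_apply]; abel
    rw [hs, finRotate_succ_apply]; abel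
  simp only [hpred] at h
  have hLHS : ∑ j : Fin m, ∑ s ∈ Finset.univ.filter (fun s : Fin 2 => s ≤ ℓ (-j)), d (q (-j)) s
      = ∑ j : Fin m, Dsum d (q j) (ℓ j) :=
    Fintype.sum_equiv (Equiv.neg (Fin m)) _ _ (fun j => rfl)
  have hRHS : ∑ j : Fin m, (α (q (-j)) (q (-j)) (ℓ (-j)) -
        α (q (-j)) (q (finRotate m (-j))) (ℓ (-j)))
      = ∑ j : Fin m, (α (q j) (q j) (ℓ j) - α (q j) (q (finRotate m j)) (ℓ j)) :=
    Fintype.sum_equiv (Equiv.neg (Fin m)) _ _ (fun j => rfl)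
  rw [hLHS, hRHS] at h
  calc ∑ i : Fin m, wgt α d (q i) (q (finRotate m i))
      = ∑ i : Fin m, (Dsum d (q i) (ℓ i) -
          (α (q i) (q i) (ℓ i) - α (q i) (q (finRotate m i)) (ℓ i))) := by
        refine Finset.sum_congr rfl fun i _ => ?_
        rw [hℓ i]; ring
    _ = (∑ i : Fin m, Dsum d (q i) (ℓ i)) -
          ∑ i : Fin m, (α (q i) (q i) (ℓ i) - α (q i) (q (finRotate m i)) (ℓ i)) :=
        Finset.sum_sub_distrib _ _
    _ ≤ 0 := by linarith

end Achieve

section Walk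

lemma walk_le {K : ℕ} (hK : 2 ≤ K) (α : Fin K → Fin K → Fin 2 → ℝ)
    (hα : ∀ k i l, 0 ≤ α k i l) {d : Fin K → Fin 2 → ℝ}
    (hcell : ∀ (i : Fin K) (li : Fin 2), Dsum d i li ≤ α i i li)
    (hcyc : ∀ m : ℕ, 2 ≤ m → m ≤ K → ∀ c : Fin m → Fin K, Function.Injective c →
      ∀ ℓ : Fin m → Fin 2,
        ∑ j : Fin m, ∑ s ∈ Finset.univ.filter (fun s : Fin 2 => s ≤ ℓ j), d (c j) s ≤
          ∑ j : Fin m, (α (c j) (c j) (ℓ j) - α (c j) (c ((finRotate m).symm j)) (ℓ j))) :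
    ∀ (t : ℕ) (p : ℕ → Fin K), (∀ s, s < t → p s ≠ p (s + 1)) → wval α d t p ≤ 0 := by
  classical
  have hcst : ∀ k, cst α d k ≤ 0 :=
    fun k => max_le (by linarith [hcell k 0]) (by linarith [hcell k 1])
  have hcw : ∀ k j, cst α d k ≤ wgt α d k j :=
    fun k j => max_le_max (by linarith [hα k j 0]) (by linarith [hα k j 1])
  intro t
  induction t using Nat.strong_induction_on with
  | _ t IH =>
  intro p hp
  by_cases hrep : ∃ b, b ≤ t ∧ ∃ a, a < b ∧ p a = p b
  · -- a repeated vertex: splice out a simple cycle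
    obtain ⟨hble, a, hab, hpab⟩ := Nat.find_spec hrep
    set b := Nat.find hrep with hbdef
    have hm2 : 2 ≤ b - a := by
      rcases Nat.lt_or_ge (a + 1) b with h | h
      · omega
      · have hb1 : b = a + 1 := by omega
        exact absurd (hb1 ▸ hpab) (hp a (by omega))
    set m := b - a with hmdef
    have hmb : a + m = b := by omega
    have hinj : Function.Injective (fun i : Fin m => p (a + i.val)) := by
      intro x y hxy
      by_contra hne
      have hxy' : x.val ≠ y.val := fun h => hne (Fin.ext h)
      have hxm := x.isLt
      have hym := y.isLt
      rcases Nat.lt_or_ge x.val y.val with hlt | hge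
      · exact Nat.find_min hrep (show a + y.val < b by omega)
          ⟨by omega, a + x.val, by omega, hxy⟩
      · exact Nat.find_min hrep (show a + x.val < b by omega)
          ⟨by omega, a + y.val, by omega, hxy.symm⟩
    have hcy := wcyc hK α hcyc m hm2 (fun i => p (a + i.val)) hinj
    have hterm : ∀ i : Fin m, wgt α d (p (a + i.val)) (p (a + ((finRotate m) i).val)) =
        wgt α d (p (a + i.val)) (p (a + i.val + 1)) := by
      intro i
      rw [finRotate_val' hm2 i]
      by_cases hi : i.val + 1 < m
      · rw [if_pos hi, ← Nat.add_assoc]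
      · rw [if_neg hi, Nat.add_zero, hpab, show a + i.val + 1 = b from by omega]
    have hcysum : ∑ s ∈ Finset.Ico a b, wgt α d (p s) (p (s + 1)) ≤ 0 := by
      have h1 : ∑ i : Fin m, wgt α d (p (a + i.val)) (p (a + ((finRotate m) i).val)) =
          ∑ i : Fin m, (fun s : ℕ => wgt α d (p (a + s)) (p (a + s + 1))) i.val :=
        Finset.sum_congr rfl fun i _ => hterm i
      rw [h1, Fin.sum_univ_eq_sum_range (fun s : ℕ => wgt α d (p (a + s)) (p (a + s + 1))) m]
        at hcy
      rw [Finset.sum_Ico_eq_sum_range]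
      exact hcy
    set p' : ℕ → Fin K := fun s => if s < a then p s else p (s + m) with hp'
    have hp'valid : ∀ s, s < t - m → p' s ≠ p' (s + 1) := by
      intro s hs
      by_cases h1 : s + 1 < a
      · simp only [hp', if_pos (show s < a by omega), if_pos h1]
        exact hp s (by omega)
      · by_cases h2 : s < a
        · have ha : s + 1 = a := by omega
          simp only [hp', if_pos h2, if_neg h1]
          rw [show s + 1 + m = b from by omega, ← hpab, ← ha]
          exact hp s (by omega)
        · simp only [hp', if_neg h2, if_neg h1]
          rw [show s + 1 + m = s + m + 1 from by omega]
          exact hp (s + m) (by omega)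
    have hca : a ≤ t - m := by omega
    have hval : wval α d t p =
        wval α d (t - m) p' + ∑ s ∈ Finset.Ico a b, wgt α d (p s) (p (s + 1)) := by
      have e1 : ∑ s ∈ Finset.range t, wgt α d (p s) (p (s + 1)) =
          (∑ s ∈ Finset.Ico 0 a, wgt α d (p s) (p (s + 1))) +
          ((∑ s ∈ Finset.Ico a b, wgt α d (p s) (p (s + 1))) +
           (∑ s ∈ Finset.Ico b t, wgt α d (p s) (p (s + 1)))) := by
        rw [Finset.sum_Ico_consecutive _ (show a ≤ b by omega) hble,
          Finset.sum_Ico_consecutive _ (Nat.zero_le a) (show a ≤ t by omega),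
          Finset.range_eq_Ico]
      have e2 : ∑ s ∈ Finset.range (t - m), wgt α d (p' s) (p' (s + 1)) =
          (∑ s ∈ Finset.Ico 0 a, wgt α d (p s) (p (s + 1))) +
          (∑ s ∈ Finset.Ico b t, wgt α d (p s) (p (s + 1))) := by
        rw [Finset.range_eq_Ico, ← Finset.sum_Ico_consecutive _ (Nat.zero_le a) hca]
        congr 1
        · refine Finset.sum_congr rfl fun s hs => ?_
          have hsa : s < a := (Finset.mem_Ico.mp hs).2
          by_cases h1 : s + 1 < a
          · simp only [hp', if_pos hsa, if_pos h1]
          · have ha : s + 1 = a := by omega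
            simp only [hp', if_pos hsa, if_neg h1]
            rw [show s + 1 + m = b from by omega, ← hpab, ← ha]
        · rw [Finset.sum_Ico_eq_sum_range, Finset.sum_Ico_eq_sum_range,
            show t - m - a = t - b from by omega]
          refine Finset.sum_congr rfl fun u _ => ?_
          simp only [hp', if_neg (show ¬ a + u < a by omega),
            if_neg (show ¬ a + u + 1 < a by omega)]
          rw [show a + u + m = b + u from by omega, show a + u + 1 + m = b + u + 1 from by omega]
      have e3 : p' (t - m) = p t := by
        simp only [hp', if_neg (show ¬ t - m < a by omega)]
        rw [show t - m + m = t from by omega]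
      rw [wval, wval, e1, e2, e3]
      ring
    have hIH := IH (t - m) (by omega) p' hp'valid
    linarith
  · -- no repetition: the walk is simple
    push_neg at hrep
    have hinj : Function.Injective (fun i : Fin (t + 1) => p i.val) := by
      intro x y hxy
      rcases lt_trichotomy x.val y.val with hlt | heq | hlt
      · exact absurd hxy (hrep y.val (by omega) x.val hlt)
      · exact Fin.ext heq
      · exact absurd hxy.symm (hrep x.val (by omega) y.val hlt)
    rcases Nat.eq_zero_or_pos t with rfl | ht
    · have he : wval α d 0 p = cst α d (p 0) := by simp [wval]
      rw [he]; exact hcst (p 0)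
    · have hcy := wcyc hK α hcyc (t + 1) (by omega) (fun i => p i.val) hinj
      have hterm : ∀ i : Fin (t + 1), wgt α d (p i.val) (p ((finRotate (t + 1) i).val)) =
          (fun s : ℕ => if s + 1 < t + 1 then wgt α d (p s) (p (s + 1))
            else wgt α d (p t) (p 0)) i.val := by
        intro i
        simp only [finRotate_val' (show 2 ≤ t + 1 by omega) i]
        by_cases hi : i.val + 1 < t + 1
        · simp only [if_pos hi]
        · have hit : i.val = t := by have := i.isLt; omega
          simp only [hit, if_neg (show ¬ t + 1 < t + 1 by omega)]
      have h1 : ∑ i : Fin (t + 1), wgt α d (p i.val) (p ((finRotate (t + 1) i).val)) =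
          ∑ s ∈ Finset.range (t + 1), (fun s : ℕ => if s + 1 < t + 1 then
            wgt α d (p s) (p (s + 1)) else wgt α d (p t) (p 0)) s := by
        rw [← Fin.sum_univ_eq_sum_range]
        exact Finset.sum_congr rfl fun i _ => hterm i
      rw [h1, Finset.sum_range_succ] at hcy
      rw [if_neg (by omega)] at hcy
      have h2 : ∑ s ∈ Finset.range t, (fun s : ℕ => if s + 1 < t + 1 then
          wgt α d (p s) (p (s + 1)) else wgt α d (p t) (p 0)) s =
          ∑ s ∈ Finset.range t, wgt α d (p s) (p (s + 1)) := by
        refine Finset.sum_congr rfl fun s hs => ?_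
        have hst : s + 1 < t + 1 := by have := Finset.mem_range.mp hs; omega
        simp only [if_pos hst]
      rw [h2] at hcy
      have := hcw (p t) (p 0)
      rw [wval]
      linarith

end Walk

section AchieveMain

lemma achieve {K : ℕ} (hK : 2 ≤ K) (α : Fin K → Fin K → Fin 2 → ℝ)
    (hα : ∀ k i l, 0 ≤ α k i l) {d : Fin K → Fin 2 → ℝ}
    (hd0 : ∀ (i : Fin K) (li : Fin 2), 0 ≤ d i li)
    (hcell : ∀ (i : Fin K) (li : Fin 2), Dsum d i li ≤ α i i li)
    (hcyc : ∀ m : ℕ, 2 ≤ m → m ≤ K → ∀ c : Fin m → Fin K, Function.Injective c →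
      ∀ ℓ : Fin m → Fin 2,
        ∑ j : Fin m, ∑ s ∈ Finset.univ.filter (fun s : Fin 2 => s ≤ ℓ j), d (c j) s ≤
          ∑ j : Fin m, (α (c j) (c j) (ℓ j) - α (c j) (c ((finRotate m).symm j)) (ℓ j))) :
    d ∈ IBCstar hK α := by
  classical
  set V : Fin K → Set ℝ := fun k =>
    {v | ∃ t p, p 0 = k ∧ (∀ s, s < t → p s ≠ p (s + 1)) ∧ wval α d t p = v} with hV
  have hne : ∀ k, (V k).Nonempty := by
    intro k
    exact ⟨wval α d 0 (fun _ => k), 0, fun _ => k, rfl, by omega, rfl⟩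
  have hub : ∀ k, ∀ v ∈ V k, v ≤ 0 := by
    rintro k v ⟨t, p, hp0, hpv, rfl⟩
    exact walk_le hK α hα hcell hcyc t p hpv
  have hbdd : ∀ k, BddAbove (V k) := fun k => ⟨0, fun v hv => hub k v hv⟩
  set x : Fin K → ℝ := fun k => sSup (V k) with hx
  have hx0 : ∀ k, x k ≤ 0 := fun k => csSup_le (hne k) (hub k)
  have hxc : ∀ k, cst α d k ≤ x k := by
    intro k
    refine le_csSup (hbdd k) ?_
    exact ⟨0, fun _ => k, rfl, by omega, by simp [wval]⟩
  have hxe : ∀ k j, j ≠ k → wgt α d k j + x j ≤ x k := by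
    intro k j hjk
    have hmem : ∀ v ∈ V j, wgt α d k j + v ≤ x k := by
      rintro v ⟨t, p, hp0, hpv, rfl⟩
      refine le_csSup (hbdd k) ?_
      refine ⟨t + 1, fun s => Nat.casesOn s k (fun s' => p s'), rfl, ?_, ?_⟩
      · intro s hs
        cases s with
        | zero =>
          show k ≠ p 0
          rw [hp0]; exact hjk.symm
        | succ s' =>
          show p s' ≠ p (s' + 1)
          exact hpv s' (by omega)
      · show (∑ s ∈ Finset.range (t + 1), wgt α d
            (Nat.casesOn s k (fun s' => p s') : Fin K)
            (Nat.casesOn (s + 1) k (fun s' => p s') : Fin K)) +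
            cst α d (p t) = wgt α d k j + wval α d t p
        rw [Finset.sum_range_succ']
        show (∑ s ∈ Finset.range t, wgt α d (p s) (p (s + 1))) + wgt α d k (p 0) +
          cst α d (p t) = wgt α d k j + wval α d t p
        rw [hp0, wval]
        ring
    have h2 : x j ≤ x k - wgt α d k j :=
      csSup_le (hne j) (fun v hv => by linarith [hmem v hv])
    linarith
  -- the power allocation
  refine ⟨fun _ => 1, fun k u => if u = 0 then x k else x k - d k 0, ?_, ?_⟩
  · intro k l
    rcases fin2cases l with rfl | rfl
    · simpa using hx0 k
    · have := hd0 k 0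
      have := hx0 k
      simp only [if_neg (show (1 : Fin 2) ≠ 0 by decide)]
      linarith
  · intro k
    have hone : ∀ u : Fin 2, (1 : Equiv.Perm (Fin 2)) u = u := fun u => rfl
    have hD0 := Dsum_zero d k
    have hD1 := Dsum_one d k
    have hcst0 : Dsum d k 0 - α k k 0 ≤ x k := le_trans (le_max_left _ _) (hxc k)
    have hcst1 : Dsum d k 1 - α k k 1 ≤ x k := le_trans (le_max_right _ _) (hxc k)
    -- interference bounds
    have hM : ∀ li : Fin 2, crossMax hK k (fun j l =>
        α k j li + (if l = 0 then x j else x j - d j 0)) ≤ x k + α k k li - Dsum d k li := by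
      intro li
      refine crossMax_le hK (fun j l hjk => ?_)
      have hrj : (if l = 0 then x j else x j - d j 0) ≤ x j := by
        rcases fin2cases l with rfl | rfl
        · simp
        · simp only [if_neg (show (1 : Fin 2) ≠ 0 by decide)]
          linarith [hd0 j 0]
      have hwle : Dsum d k li - α k k li + α k j li ≤ wgt α d k j := by
        rcases fin2cases li with rfl | rfl
        · exact le_max_left _ _
        · exact le_max_right _ _
      have := hxe k j hjk
      linarith
    constructor
    · constructor
      · simpa [hone] using hd0 k 0
      · simp only [ibcBound1, hone, eq_self_iff_true, if_true,
          if_neg (show (1 : Fin 2) ≠ 0 by decide)]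
        refine le_trans (le_min ?_ ?_) (le_max_right 0 _)
        · -- component with signal level 0
          have hMle := hM 0
          have hple : pplus (max (α k k 0 + (x k - d k 0))
              (crossMax hK k fun j l => α k j 0 + (if l = 0 then x j else x j - d j 0))) ≤
              α k k 0 + x k - d k 0 := by
            refine pplus_le (max_le (by linarith) (by linarith [hMle])) ?_
            linarith [hcst0, hD0, hd0 k 0]
          linarith [hple]
        · have hMle := hM 1
          have hple : pplus (max (α k k 1 + (x k - d k 0))
              (crossMax hK k fun j l => α k j 1 + (if l = 0 then x j else x j - d j 0))) ≤
              α k k 1 + x k - d k 0 := by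
            refine pplus_le (max_le (by linarith) (by linarith [hMle, hD1, hd0 k 1])) ?_
            linarith [hcst1, hD1, hd0 k 1, hd0 k 0]
          linarith [hple]
    · constructor
      · simpa [hone] using hd0 k 1
      · simp only [ibcBound2, hone, eq_self_iff_true, if_true,
          if_neg (show (1 : Fin 2) ≠ 0 by decide)]
        refine le_trans ?_ (le_max_right 0 _)
        have hMle := hM 1
        have hple : pplus (crossMax hK k fun j l =>
            α k j 1 + (if l = 0 then x j else x j - d j 0)) ≤
            α k k 1 + x k - d k 0 - d k 1 := by
          refine pplus_le (by linarith [hMle, hD1]) (by linarith [hcst1, hD1])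
        linarith [hple]

end AchieveMain

/-- **Polyhedral characterization of `P^IBC⋆` under the TIN-optimality conditions**
(region part of Theorem 2). Under conditions (i) and (ii), the general
TIN-achievable GDoF region of the IBC equals the polyhedron described by the
nonnegativity constraints, the per-cell (degraded BC) constraints, and the
cyclic constraints over sequences of distinct cells. -/
theorem ibc_tin_optimal_region {K : ℕ} (hK : 2 ≤ K) (α : Fin K → Fin K → Fin 2 → ℝ)
    (hα : ∀ k i l, 0 ≤ α k i l) (hord : ∀ k, α k k 0 ≤ α k k 1)
    (h1 : ∀ i : Fin K, α i i 0 + cellMax hK i (fun j => α i j 1) ≤ α i i 1)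
    (h2 : ∀ i : Fin K, ∀ li : Fin 2,
      cellMax hK i (fun j => α i j li) + crossMax hK i (fun j l => α j i l) ≤ α i i li) :
    IBCstar hK α =
      {d | (∀ (i : Fin K) (li : Fin 2), 0 ≤ d i li) ∧
        (∀ (i : Fin K) (li : Fin 2),
          ∑ s ∈ Finset.univ.filter (fun s : Fin 2 => s ≤ li), d i s ≤ α i i li) ∧
        (∀ m : ℕ, 2 ≤ m → m ≤ K → ∀ c : Fin m → Fin K, Function.Injective c →
          ∀ ℓ : Fin m → Fin 2,
            ∑ j : Fin m, ∑ s ∈ Finset.univ.filter (fun s : Fin 2 => s ≤ ℓ j), d (c j) s ≤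
              ∑ j : Fin m,
                (α (c j) (c j) (ℓ j) - α (c j) (c ((finRotate m).symm j)) (ℓ j)))} := by
  ext d
  constructor
  · rintro ⟨π, r, hr, hd⟩
    refine ⟨?_, ?_, ?_⟩
    · intro i u
      obtain ⟨⟨h1a, _⟩, h2a, _⟩ := hd i
      rcases perm2 (π i) with ⟨e0, e1⟩ | ⟨e0, e1⟩ <;> rcases fin2cases u with rfl | rfl
      · rwa [e0] at h1a
      · rwa [e1] at h2a
      · rwa [e1] at h2a
      · rwa [e0] at h1a
    · exact fun i li => lemA hK α hα hord hr hd i li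
    · intro m hm2 _hmK c hc ℓ
      exact cycle_bound hK α hα hord h1 h2 hr hd m hm2 c hc ℓ
  · rintro ⟨hd0, hcell, hcyc⟩
    exact achieve hK α hα hd0 (fun i li => hcell i li) hcyc
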